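/- The number of plane forests with ranked roots having empirical children distribution s = (s_i : i ≥ 0), where the forest has z = Σ_i s_i − Σ_i i·s_i roots and m = Σ_i s_i vertices total, equals z·(m−1)!/∏_{i≥0} s_i!. -/

import Mathlib

open scoped BigOperators Classical
open Filter MeasureTheory

namespace Paper

inductive PlaneTree : Type
  | node : List PlaneTree → PlaneTree

namespace PlaneTree

def deg : PlaneTree → ℕ
  | node ts => ts.length

mutual
  def pos : PlaneTree → List (List ℕ)
    | node ts => [] :: posF 0 ts
  def posF : ℕ → List PlaneTree → List (List ℕ)
    | _, [] => []
    | i, t :: ts => (pos t).map (fun q => i :: q) ++ posF (i + 1) ts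
end

mutual
  def dfsDeg : PlaneTree → List ℕ
    | node ts => ts.length :: dfsDegF ts
  def dfsDegF : List PlaneTree → List ℕ
    | [] => []
    | t :: ts => dfsDeg t ++ dfsDegF ts
end

def subtreeAt : PlaneTree → List ℕ → Option PlaneTree
  | t, [] => some t
  | node ts, i :: p =>
    match ts[i]? with
    | some t' => subtreeAt t' p
    | none => none

def numChild (t : PlaneTree) (p : List ℕ) : ℕ := ((subtreeAt t p).map deg).getD 0

def IsVertex (t : PlaneTree) (p : List ℕ) : Prop := (subtreeAt t p).isSome

def IsLeaf (t : PlaneTree) (p : List ℕ) : Prop := (subtreeAt t p).isSome ∧ numChild t p = 0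

/-- number of vertices of `t` having exactly `i` children (empirical children distribution) -/
def ecd (t : PlaneTree) (i : ℕ) : ℕ :=
  ((pos t).filter fun p => decide (numChild t p = i)).length

/-- ECD of a plane forest with ranked roots -/
def ecdF (f : List PlaneTree) (i : ℕ) : ℕ := (f.map fun t => ecd t i).sum

/-- number of children of the `j`-th root of a forest -/
def rootDeg (f : List PlaneTree) (j : ℕ) : ℕ := deg (f.getD j (node []))

/-- the set of plane forests with ranked roots with ECD `s` -/
def forestSet (s : ℕ → ℕ) : Set (List PlaneTree) := {f | ∀ i, ecdF f i = s i}

/-- the set of plane trees with ECD `s` -/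
def treeSet (s : ℕ → ℕ) : Set PlaneTree := {t | ∀ i, ecd t i = s i}

/-- strict depth-first (preorder) order on positions -/
def dfLT (p q : List ℕ) : Prop := List.Lex (· < ·) p q

def parent (p : List ℕ) : List ℕ := p.dropLast

/-- `q` is a strict ancestor of `p`, i.e. `q ∈ [ρ, p)` -/
def StrictAnc (q p : List ℕ) : Prop := q <+: p ∧ q ≠ p

/-- admissible (ordered) pair of leaves -/
def Admissible (t : PlaneTree) (u v : List ℕ) : Prop :=
  IsLeaf t u ∧ IsLeaf t v ∧ 2 ≤ v.length ∧
    StrictAnc (parent (parent v)) (parent u) ∧ dfLT (parent u) (parent v)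

def ASet (t : PlaneTree) : Set (List ℕ × List ℕ) := {uv | Admissible t uv.1 uv.2}

def fA (t : PlaneTree) (u : List ℕ) : Set (List ℕ) := {v | Admissible t u v}

def B2 (t : PlaneTree) (u : List ℕ) : Set (List ℕ) :=
  {v | IsVertex t v ∧ 2 ≤ v.length ∧ StrictAnc (parent (parent v)) u}

noncomputable def leafFinset (t : PlaneTree) : Finset (List ℕ) :=
  ((pos t).toFinset).filter fun p => IsLeaf t p

def leafOf {k : ℕ} (w : Fin k → List ℕ × List ℕ) (y : Fin k × Bool) : List ℕ :=
  if y.2 then (w y.1).1 else (w y.1).2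

/-- ordered `k`-tuples of admissible pairs using `2k` distinct leaves -/
def AkOrd (t : PlaneTree) (k : ℕ) : Set (Fin k → List ℕ × List ℕ) :=
  {w | (∀ a, Admissible t (w a).1 (w a).2) ∧ Function.Injective (leafOf w)}

/-- unordered collections of `k` admissible pairs using `2k` distinct leaves -/
def Ak (t : PlaneTree) (k : ℕ) : Set (Finset (List ℕ × List ℕ)) :=
  {x | x.card = k ∧ (∀ uv ∈ x, Admissible t uv.1 uv.2) ∧
    Set.InjOn (fun y : (List ℕ × List ℕ) × Bool => if y.2 then y.1.1 else y.1.2)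
      {y | y.1 ∈ x}}

/-- the set `T_s^(k)` of pairs of a plane tree with ECD `s` and a set of `k` admissible pairs -/
def Tsk (s : ℕ → ℕ) (k : ℕ) : Set (PlaneTree × Finset (List ℕ × List ℕ)) :=
  {tx | (∀ i, ecd tx.1 i = s i) ∧ tx.2 ∈ Ak tx.1 k}

end PlaneTree

/-- labeled plane trees -/
inductive LTree : Type
  | node : ℕ → List LTree → LTree

namespace LTree

mutual
  def shape : LTree → PlaneTree
    | node _ ts => .node (shapeF ts)
  def shapeF : List LTree → List PlaneTree
    | [] => []
    | t :: ts => shape t :: shapeF ts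
end

mutual
  def dfsLab : LTree → List ℕ
    | node a ts => a :: dfsLabF ts
  def dfsLabF : List LTree → List ℕ
    | [] => []
    | t :: ts => dfsLab t ++ dfsLabF ts
end

mutual
  def dfsDeg : LTree → List ℕ
    | node _ ts => ts.length :: dfsDegF ts
  def dfsDegF : List LTree → List ℕ
    | [] => []
    | t :: ts => dfsDeg t ++ dfsDegF ts
end

def subtreeAt : LTree → List ℕ → Option LTree
  | t, [] => some t
  | node _ ts, i :: p =>
    match ts[i]? with
    | some t' => subtreeAt t' p
    | none => none

def labelAt (t : LTree) (p : List ℕ) : ℕ :=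
  ((subtreeAt t p).map fun u => match u with | node a _ => a).getD 0

end LTree

/-- partial-sum steps of the permuted walk -/
def steps {m : ℕ} (c : Fin m → ℕ) (π : Equiv.Perm (Fin m)) : List ℤ :=
  List.ofFn fun i => (c (π i) : ℤ) - 1

/-- first index `j ∈ [1, length]` at which the partial sums attain their minimum -/
noncomputable def firstMinIdx (l : List ℤ) : ℕ :=
  WithTop.untopD 0 ((Finset.Icc 1 l.length).filter fun j =>
      ∀ j' ∈ Finset.Icc 1 l.length, (l.take j).sum ≤ (l.take j').sum).min

/-- the DFS vertex sequence obtained by rotating the uniformly permuted vertex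
sequence at the first minimum of its Łukasiewicz-type walk (Vervaat transform) -/
noncomputable def rotSeq {m : ℕ} (c : Fin m → ℕ) (π : Equiv.Perm (Fin m)) : List (Fin m) :=
  (List.ofFn fun i => π i).rotate (firstMinIdx (steps c π))

/-- the degree of a vertex in a (simple) edge set -/
def degIn (E : Finset (Sym2 ℕ)) (v : ℕ) : ℕ := (E.filter fun e => v ∈ e).card

/-- degree of a vertex in a multigraph given by an edge multiset (loops count twice) -/
def mdeg (E : Multiset (Sym2 ℕ)) (v : ℕ) : ℕ :=
  (E.map fun e => (if v ∈ e then 1 else 0) + (if e = s(v, v) then 1 else 0)).sum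

/-- connectivity of a (multi)graph on vertex set `V` with edges `E` -/
def ConnOn (V : Finset ℕ) (E : Set (Sym2 ℕ)) : Prop :=
  ∀ a ∈ V, ∀ b ∈ V, Relation.ReflTransGen (fun a b => s(a, b) ∈ E) a b

/-- the set of simple connected labeled graphs on `{1, …, m}` with degree sequence `d` -/
def GconSet (m : ℕ) (d : ℕ → ℕ) : Set (Finset (Sym2 ℕ)) :=
  {E | (∀ e ∈ E, ¬ e.IsDiag) ∧ (∀ e ∈ E, ∀ v ∈ e, v ∈ Finset.Icc 1 m) ∧
       (∀ v ∈ Finset.Icc 1 m, degIn E v = d v) ∧ ConnOn (Finset.Icc 1 m) (E : Set (Sym2 ℕ))}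

/-- ECD of the children sequence `(d̃₂ − 1, …, d̃_{m̃} − 1, 0, …, 0)` (with `2k` zeros) -/
def ecdFromDeg (m k : ℕ) (d : ℕ → ℕ) (i : ℕ) : ℕ :=
  ((Finset.Icc 2 m).filter fun j => d j = i + 1).card + if i = 0 then 2 * k else 0

/-- `≪` order on admissible pairs -/
def pairLT (a b : List ℕ × List ℕ) : Prop :=
  PlaneTree.dfLT (PlaneTree.parent a.1) (PlaneTree.parent b.1) ∨
    (PlaneTree.parent a.1 = PlaneTree.parent b.1 ∧
      PlaneTree.dfLT (PlaneTree.parent a.2) (PlaneTree.parent b.2))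

/-- labeled elements of `T_s^(k)` as in the sampling algorithm: a labeled plane tree whose
labels are `{2, …, m̃ + 2k}`, in which the vertex labeled `j ≤ m̃` has `d̃_j − 1` children and
the vertices labeled `> m̃` are leaves, together with a `≪`-increasing tuple of `k` admissible
pairs of leaves with distinct leaves, the `j`-th pair carrying labels `(m̃+2j−1, m̃+2j)`. -/
def IsLabeledElement (m k : ℕ) (d : ℕ → ℕ) (t : LTree)
    (x : Fin k → List ℕ × List ℕ) : Prop :=
  (LTree.dfsLab t).Perm (List.range' 2 (m - 1 + 2 * k)) ∧
  (∀ p ∈ PlaneTree.pos (LTree.shape t),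
    PlaneTree.numChild (LTree.shape t) p =
      (if 2 ≤ LTree.labelAt t p ∧ LTree.labelAt t p ≤ m then d (LTree.labelAt t p) - 1 else 0)) ∧
  (∀ j, PlaneTree.Admissible (LTree.shape t) (x j).1 (x j).2) ∧
  Function.Injective (PlaneTree.leafOf x) ∧
  (∀ j j' : Fin k, j < j' → pairLT (x j) (x j')) ∧
  (∀ j : Fin k, LTree.labelAt t (x j).1 = m + 2 * (j : ℕ) + 1 ∧
      LTree.labelAt t (x j).2 = m + 2 * (j : ℕ) + 2)

/-- the edge multiset of the graph `I(t, x)`: tree edges, with the leaves of the admissible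
pairs deleted and an edge joining the two parents of each admissible pair added -/
noncomputable def Iedges (t : LTree) {k : ℕ} (x : Fin k → List ℕ × List ℕ) :
    Multiset (Sym2 ℕ) :=
  (↑(((PlaneTree.pos (LTree.shape t)).filter fun p =>
        decide (p ≠ ([] : List ℕ) ∧ ∀ j, p ≠ (x j).1 ∧ p ≠ (x j).2)).map
      fun p => s(LTree.labelAt t (PlaneTree.parent p), LTree.labelAt t p)) : Multiset (Sym2 ℕ))
  + ↑(List.ofFn fun j =>
      s(LTree.labelAt t (PlaneTree.parent (x j).1), LTree.labelAt t (PlaneTree.parent (x j).2)))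

/- Brownian excursion: Gaussian/Bessel kernels and finite-dimensional densities -/
noncomputable def gaussD (s x : ℝ) : ℝ := Real.exp (-(x ^ 2) / (2 * s)) / Real.sqrt (2 * Real.pi * s)

noncomputable def killedK (s x y : ℝ) : ℝ := gaussD s (y - x) - gaussD s (y + x)

noncomputable def bes3K (s x y : ℝ) : ℝ := (y / x) * killedK s x y

noncomputable def exStart (t x : ℝ) : ℝ :=
  Real.sqrt (2 / Real.pi) * x ^ 2 * t ^ (-(3 : ℝ) / 2) * Real.exp (-(x ^ 2) / (2 * t))

noncomputable def exEnd (s x : ℝ) : ℝ := (2 / s) * gaussD s x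

/-- finite-dimensional density of the standard Brownian excursion at times `t 0 < … < t n` -/
noncomputable def exFdd {n : ℕ} (t : Fin (n + 1) → ℝ) (x : Fin (n + 1) → ℝ) : ℝ :=
  if ∀ i, 0 < x i then
    Real.sqrt (Real.pi / 2) * exStart (t 0) (x 0) *
      (∏ i : Fin n, bes3K (t i.succ - t i.castSucc) (x i.castSucc) (x i.succ)) *
      exEnd (1 - t (Fin.last n)) (x (Fin.last n))
  else 0

/-- `e` is a standard Brownian excursion on `[0,1]`: continuous nonnegative paths vanishing at
the endpoints, positive inside, with the excursion finite-dimensional densities. -/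
def IsStdBrownianExcursion {Ω : Type*} [MeasureSpace Ω] (e : Ω → ℝ → ℝ) : Prop :=
  (∀ ω, Continuous (e ω)) ∧ (∀ ω, e ω 0 = 0) ∧ (∀ ω, e ω 1 = 0) ∧
  (∀ ω, ∀ x ∈ Set.Ioo (0 : ℝ) 1, 0 < e ω x) ∧
  (∀ t : ℝ, Measurable fun ω => e ω t) ∧
  ∀ (n : ℕ) (t : Fin (n + 1) → ℝ), StrictMono t → 0 < t 0 → t (Fin.last n) < 1 →
    Measure.map (fun ω i => e ω (t i)) (volume : Measure Ω)
      = volume.withDensity fun x => ENNReal.ofReal (exFdd t x)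

/-- `j`-th smallest value (0-based) among `ω 0, …, ω (m−1)` -/
noncomputable def orderStat {m : ℕ} (ω : Fin m → ℝ) (j : ℕ) : ℝ :=
  ((Multiset.map ω Finset.univ.val).sort (· ≤ ·)).getD j 0

end Paper


section Aux
namespace Paper.PlaneTree

theorem tree_ind {P : PlaneTree → Prop}
    (h : ∀ ts : List PlaneTree, (∀ c ∈ ts, P c) → P (.node ts)) : ∀ t, P t := by
  have key : ∀ n (t : PlaneTree), sizeOf t ≤ n → P t := by
    intro n
    induction n with
    | zero => intro t ht; cases t with | node ts => simp at ht
    | succ n ih =>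
      intro t ht
      cases t with
      | node ts =>
        refine h ts fun c hc => ih c ?_
        have := List.sizeOf_lt_of_mem hc
        simp at ht
        omega
  exact fun t => key (sizeOf t) t le_rfl

theorem numChild_nil (ts : List PlaneTree) : numChild (.node ts) [] = ts.length := rfl

theorem numChild_cons {cs : List PlaneTree} {j : ℕ} {t : PlaneTree}
    (h : cs[j]? = some t) (q : List ℕ) :
    numChild (.node cs) (j :: q) = numChild t q := by
  simp [numChild, subtreeAt, h]

theorem posF_map (cs : List PlaneTree) :
    ∀ (ts : List PlaneTree) (n : ℕ), (∀ k t, ts[k]? = some t → cs[n + k]? = some t) →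
    (posF n ts).map (fun p => numChild (.node cs) p)
      = (ts.map fun t => (pos t).map (numChild t)).flatten := by
  intro ts
  induction ts with
  | nil => intro n h; simp [posF]
  | cons t ts ih =>
    intro n h
    have h0 : cs[n]? = some t := by
      have := h 0 t (by simp)
      simpa using this
    rw [posF]
    simp only [List.map_append, List.map_map, List.map_cons, List.flatten_cons]
    congr 1
    · refine List.map_congr_left fun q hq => ?_
      exact numChild_cons h0 q
    · refine ih (n+1) fun k t' hk => ?_
      have := h (k+1) t' (by simpa using hk)
      simpa [Nat.add_assoc, Nat.add_comm 1 k] using this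

end Paper.PlaneTree
end Aux
section Aux2
namespace Paper.PlaneTree

/-- count of value `i` in a list of naturals -/
def cnt (l : List ℕ) (i : ℕ) : ℕ := (l.filter fun x => decide (x = i)).length

theorem ecd_eq_cnt (t : PlaneTree) (i : ℕ) :
    ecd t i = cnt ((pos t).map (numChild t)) i := by
  rw [ecd, cnt, List.filter_map, List.length_map]
  rfl

theorem cnt_nil (i : ℕ) : cnt [] i = 0 := rfl

theorem cnt_cons (x : ℕ) (l : List ℕ) (i : ℕ) :
    cnt (x :: l) i = (if x = i then 1 else 0) + cnt l i := by
  by_cases h : x = i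
  · simp [cnt, h]; omega
  · simp [cnt, h]

theorem cnt_append (l₁ l₂ : List ℕ) (i : ℕ) :
    cnt (l₁ ++ l₂) i = cnt l₁ i + cnt l₂ i := by
  simp [cnt]

theorem cnt_flatten (L : List (List ℕ)) (i : ℕ) :
    cnt L.flatten i = (L.map fun l => cnt l i).sum := by
  induction L with
  | nil => rfl
  | cons l L ih => simp [cnt_append, ih]

theorem sum_cnt (l : List ℕ) (N : ℕ) (h : ∀ x ∈ l, x < N) :
    ∑ i ∈ Finset.range N, cnt l i = l.length := by
  induction l with
  | nil => simp [cnt_nil]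
  | cons x l ih =>
    have hx : x < N := h x (by simp)
    simp only [cnt_cons, Finset.sum_add_distrib]
    rw [ih (fun y hy => h y (by simp [hy]))]
    simp [Finset.sum_ite_eq, hx]; omega

theorem sum_mul_cnt (l : List ℕ) (N : ℕ) (h : ∀ x ∈ l, x < N) :
    ∑ i ∈ Finset.range N, i * cnt l i = l.sum := by
  induction l with
  | nil => simp [cnt_nil]
  | cons x l ih =>
    have hx : x < N := h x (by simp)
    simp only [cnt_cons, Nat.mul_add, Finset.sum_add_distrib]
    rw [ih (fun y hy => h y (by simp [hy]))]
    have : ∑ i ∈ Finset.range N, i * (if x = i then 1 else 0) = x := by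
      rw [Finset.sum_congr rfl (fun i _ => by rw [mul_ite, mul_one, mul_zero])]
      simp [Finset.sum_ite_eq, hx]
    simp [Finset.sum_ite_eq, hx]

end Paper.PlaneTree
end Aux2
section Aux3
namespace Paper.PlaneTree

theorem map_pos_node (ts : List PlaneTree) :
    (pos (.node ts)).map (numChild (.node ts))
      = ts.length :: (ts.map fun t => (pos t).map (numChild t)).flatten := by
  rw [pos, List.map_cons, numChild_nil, posF_map ts ts 0 (fun k t hk => by simpa using hk)]

theorem pos_length_pos (t : PlaneTree) : 1 ≤ (pos t).length := by
  cases t with | node ts => rw [pos]; simp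

theorem pos_node_length (ts : List PlaneTree) :
    (pos (.node ts)).length = 1 + (ts.map fun t => (pos t).length).sum := by
  have := congrArg List.length (map_pos_node ts)
  simp only [List.length_map, List.length_cons, List.length_flatten] at this
  rw [this]
  simp only [List.map_map, Function.comp_def, List.length_map]
  omega

theorem sum_list_succ (ts : List PlaneTree) (g : PlaneTree → ℕ) :
    (ts.map fun c => g c + 1).sum = (ts.map g).sum + ts.length := by
  induction ts with
  | nil => simp
  | cons c ts ih => simp [ih]; omega

theorem sum_numChild (t : PlaneTree) :
    ((pos t).map (numChild t)).sum + 1 = (pos t).length := by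
  induction t using tree_ind with
  | _ ts ih =>
    rw [map_pos_node, pos_node_length, List.sum_cons, List.sum_flatten, List.map_map]
    simp only [Function.comp_def]
    have : (ts.map fun c => ((pos c).map (numChild c)).sum + 1).sum
        = (ts.map fun c => (pos c).length).sum :=
      congrArg List.sum (List.map_congr_left fun c hc => ih c hc)
    rw [sum_list_succ] at this
    omega

theorem ecdF_nil (i : ℕ) : ecdF [] i = 0 := rfl

theorem ecdF_cons (t : PlaneTree) (f : List PlaneTree) (i : ℕ) :
    ecdF (t :: f) i = ecd t i + ecdF f i := by simp [ecdF]

theorem ecdF_append (f g : List PlaneTree) (i : ℕ) :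
    ecdF (f ++ g) i = ecdF f i + ecdF g i := by simp [ecdF]

theorem ecd_node (ts : List PlaneTree) (i : ℕ) :
    ecd (.node ts) i = (if ts.length = i then 1 else 0) + ecdF ts i := by
  rw [ecd_eq_cnt, map_pos_node, cnt_cons, cnt_flatten, List.map_map]
  congr 1
  rw [ecdF]
  exact congrArg List.sum (List.map_congr_left fun c _ => (ecd_eq_cnt c i).symm)

theorem cnt_pos {x : ℕ} {l : List ℕ} (h : x ∈ l) : 1 ≤ cnt l x := by
  rw [cnt, Nat.succ_le, List.length_pos_iff]
  exact fun hemp => (List.filter_eq_nil_iff.mp hemp) x h (by simp)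

theorem one_le_ecd {t : PlaneTree} {p : List ℕ} (h : p ∈ pos t) :
    1 ≤ ecd t (numChild t p) := by
  rw [ecd_eq_cnt]
  exact cnt_pos (List.mem_map_of_mem h)

end Paper.PlaneTree
end Aux3
section Aux4
namespace Paper.PlaneTree

/-- total number of vertices in a forest -/
def Vlen (f : List PlaneTree) : ℕ := (f.map fun t => (pos t).length).sum

theorem sum_ecd (t : PlaneTree) (N : ℕ) (h : ∀ p ∈ pos t, numChild t p < N) :
    ∑ i ∈ Finset.range N, ecd t i = (pos t).length := by
  rw [Finset.sum_congr rfl fun i _ => ecd_eq_cnt t i,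
    sum_cnt _ N (by rintro x hx; obtain ⟨p, hp, rfl⟩ := List.mem_map.mp hx; exact h p hp),
    List.length_map]

theorem sum_mul_ecd (t : PlaneTree) (N : ℕ) (h : ∀ p ∈ pos t, numChild t p < N) :
    (∑ i ∈ Finset.range N, i * ecd t i) + 1 = (pos t).length := by
  rw [Finset.sum_congr rfl fun i _ => by rw [ecd_eq_cnt t i],
    sum_mul_cnt _ N (by rintro x hx; obtain ⟨p, hp, rfl⟩ := List.mem_map.mp hx; exact h p hp),
    sum_numChild]

theorem sum_ecdF (f : List PlaneTree) (N : ℕ)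
    (h : ∀ t ∈ f, ∀ p ∈ pos t, numChild t p < N) :
    ∑ i ∈ Finset.range N, ecdF f i = Vlen f := by
  induction f with
  | nil => simp [ecdF_nil, Vlen]
  | cons t f ih =>
    simp only [ecdF_cons, Finset.sum_add_distrib, Vlen, List.map_cons, List.sum_cons]
    rw [sum_ecd t N (h t (by simp)), ih (fun t' ht' => h t' (by simp [ht']))]
    rfl

theorem sum_mul_ecdF (f : List PlaneTree) (N : ℕ)
    (h : ∀ t ∈ f, ∀ p ∈ pos t, numChild t p < N) :
    (∑ i ∈ Finset.range N, i * ecdF f i) + f.length = Vlen f := by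
  induction f with
  | nil => simp [ecdF_nil, Vlen]
  | cons t f ih =>
    simp only [ecdF_cons, Nat.mul_add, Finset.sum_add_distrib, Vlen, List.map_cons,
      List.sum_cons, List.length_cons]
    have h1 := sum_mul_ecd t N (h t (by simp))
    have h2 := ih (fun t' ht' => h t' (by simp [ht']))
    simp only [Vlen] at h2
    omega

theorem mem_forestSet_iff {s : ℕ → ℕ} {f : List PlaneTree} :
    f ∈ forestSet s ↔ ∀ i, ecdF f i = s i := Iff.rfl

theorem ecd_le_ecdF {f : List PlaneTree} {t : PlaneTree} (ht : t ∈ f) (i : ℕ) :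
    ecd t i ≤ ecdF f i :=
  List.single_le_sum (fun _ _ => Nat.zero_le _) _ (List.mem_map_of_mem ht)

theorem degree_bound {s : ℕ → ℕ} {M : ℕ} {f : List PlaneTree}
    (hsupp : ∀ i, M ≤ i → s i = 0) (hf : f ∈ forestSet s) :
    ∀ t ∈ f, ∀ p ∈ pos t, numChild t p < M := by
  intro t ht p hp
  by_contra hMle
  have h1 := one_le_ecd hp
  have h2 := ecd_le_ecdF ht (numChild t p)
  rw [mem_forestSet_iff.mp hf, hsupp _ (by omega)] at h2
  omega

theorem forest_lengths {s : ℕ → ℕ} {M z m : ℕ} {f : List PlaneTree}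
    (hsupp : ∀ i, M ≤ i → s i = 0)
    (hm : m = ∑ i ∈ Finset.range M, s i)
    (hz : m = z + ∑ i ∈ Finset.range M, i * s i)
    (hf : f ∈ forestSet s) :
    Vlen f = m ∧ f.length = z := by
  have hb := degree_bound hsupp hf
  have h1 := sum_ecdF f M hb
  have h2 := sum_mul_ecdF f M hb
  have e1 : ∑ i ∈ Finset.range M, ecdF f i = ∑ i ∈ Finset.range M, s i :=
    Finset.sum_congr rfl fun i _ => mem_forestSet_iff.mp hf i
  have e2 : ∑ i ∈ Finset.range M, i * ecdF f i = ∑ i ∈ Finset.range M, i * s i :=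
    Finset.sum_congr rfl fun i _ => by rw [mem_forestSet_iff.mp hf i]
  rw [e1] at h1
  rw [e2] at h2
  omega

theorem finite_lists {α : Type*} (F : Set α) (hF : F.Finite) :
    ∀ k, {l : List α | l.length ≤ k ∧ ∀ x ∈ l, x ∈ F}.Finite := by
  intro k
  induction k with
  | zero =>
    refine (Set.finite_singleton ([] : List α)).subset ?_
    rintro l ⟨hl, -⟩
    simp [List.length_eq_zero_iff.mp (Nat.le_zero.mp hl)]
  | succ k ih =>
    refine ((hF.image2 List.cons ih).insert []).subset ?_
    rintro l ⟨hl, hmem⟩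
    cases l with
    | nil => simp
    | cons x l =>
      right
      exact Set.mem_image2_of_mem (hmem x (by simp))
        ⟨by simpa using hl, fun y hy => hmem y (by simp [hy])⟩

theorem length_le_sum_map (ts : List PlaneTree) (g : PlaneTree → ℕ)
    (h : ∀ c ∈ ts, 1 ≤ g c) : ts.length ≤ (ts.map g).sum := by
  induction ts with
  | nil => simp
  | cons c ts ih =>
    simp only [List.map_cons, List.sum_cons, List.length_cons]
    have := h c (by simp)
    have := ih (fun c' hc' => h c' (by simp [hc']))
    omega

theorem finite_trees : ∀ n, {t : PlaneTree | (pos t).length ≤ n}.Finite := by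
  intro n
  induction n with
  | zero =>
    convert Set.finite_empty
    ext t
    simp only [Set.mem_setOf_eq, Set.mem_empty_iff_false, iff_false]
    have := pos_length_pos t
    omega
  | succ n ih =>
    refine ((finite_lists _ ih n).image PlaneTree.node).subset ?_
    rintro t ht
    cases t with
    | node ts =>
      refine ⟨ts, ⟨?_, fun c hc => ?_⟩, rfl⟩
      · have h1 := length_le_sum_map ts (fun t => (pos t).length)
          (fun c _ => pos_length_pos c)
        have h2 : (pos (PlaneTree.node ts)).length ≤ n + 1 := ht
        rw [pos_node_length] at h2
        omega
      · have h2 : (pos (PlaneTree.node ts)).length ≤ n + 1 := ht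
        rw [pos_node_length] at h2
        have h3 : (pos c).length ≤ (ts.map fun t => (pos t).length).sum :=
          List.single_le_sum (fun _ _ => Nat.zero_le _) _ (List.mem_map_of_mem hc)
        simpa using Nat.le_trans h3 (by omega)

theorem finite_forestSet {s : ℕ → ℕ} {M z m : ℕ}
    (hsupp : ∀ i, M ≤ i → s i = 0)
    (hm : m = ∑ i ∈ Finset.range M, s i)
    (hz : m = z + ∑ i ∈ Finset.range M, i * s i) :
    (forestSet s).Finite := by
  refine (finite_lists {t : PlaneTree | (pos t).length ≤ m} (finite_trees m) z).subset ?_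
  intro f hf
  obtain ⟨hV, hlen⟩ := forest_lengths hsupp hm hz hf
  refine ⟨hlen.le, fun t ht => ?_⟩
  have : (pos t).length ≤ Vlen f :=
    List.single_le_sum (fun _ _ => Nat.zero_le _) _ (List.mem_map_of_mem ht)
  simpa [hV] using this

end Paper.PlaneTree
end Aux4
section Aux5
namespace Paper.PlaneTree

/-- `s` with a vertex of out-degree `d` removed -/
def sdec (s : ℕ → ℕ) (d : ℕ) : ℕ → ℕ := fun i => s i - if i = d then 1 else 0

theorem ecdF_decomp (cs rest : List PlaneTree) (i : ℕ) :
    ecdF (PlaneTree.node cs :: rest) i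
      = (if cs.length = i then 1 else 0) + ecdF (cs ++ rest) i := by
  rw [ecdF_cons, ecd_node, ecdF_append]
  omega

theorem mem_sdec_of {s : ℕ → ℕ} {cs rest : List PlaneTree}
    (h : PlaneTree.node cs :: rest ∈ forestSet s) :
    1 ≤ s cs.length ∧ cs ++ rest ∈ forestSet (sdec s cs.length) := by
  have h' := mem_forestSet_iff.mp h
  constructor
  · have := h' cs.length
    rw [ecdF_decomp] at this
    simp at this
    omega
  · refine mem_forestSet_iff.mpr fun i => ?_
    have := h' i
    rw [ecdF_decomp] at this
    show ecdF (cs ++ rest) i = s i - if i = cs.length then 1 else 0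
    by_cases hi : cs.length = i
    · subst hi; simp at this ⊢; omega
    · rw [if_neg hi] at this
      rw [if_neg (fun hh : i = cs.length => hi hh.symm)]
      omega

theorem phi_mem {s : ℕ → ℕ} {d : ℕ} (hd1 : 1 ≤ s d) {f' : List PlaneTree}
    (h : f' ∈ forestSet (sdec s d)) (hlen : d ≤ f'.length) :
    PlaneTree.node (f'.take d) :: f'.drop d ∈ forestSet s := by
  refine mem_forestSet_iff.mpr fun i => ?_
  rw [ecdF_decomp, List.take_append_drop, List.length_take, Nat.min_eq_left hlen]
  have := mem_forestSet_iff.mp h i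
  rw [this]
  show (if d = i then 1 else 0) + (s i - if i = d then 1 else 0) = s i
  by_cases hi : i = d
  · subst hi; simp; omega
  · rw [if_neg (fun hh : d = i => hi hh.symm), if_neg hi]
    omega

theorem sdec_sum {s : ℕ → ℕ} {M d : ℕ} (hd : d < M) (hs : 1 ≤ s d) :
    (∑ i ∈ Finset.range M, sdec s d i) + 1 = ∑ i ∈ Finset.range M, s i := by
  have hpt : ∀ i ∈ Finset.range M, s i = sdec s d i + (if i = d then 1 else 0) := by
    intro i _
    show s i = (s i - if i = d then 1 else 0) + (if i = d then 1 else 0)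
    by_cases hi : i = d
    · subst hi; simp; omega
    · simp [hi]
  rw [Finset.sum_congr rfl hpt, Finset.sum_add_distrib,
    Finset.sum_ite_eq' (Finset.range M) d (fun _ => 1), if_pos (Finset.mem_range.mpr hd)]

theorem sdec_mul_sum {s : ℕ → ℕ} {M d : ℕ} (hd : d < M) (hs : 1 ≤ s d) :
    (∑ i ∈ Finset.range M, i * sdec s d i) + d = ∑ i ∈ Finset.range M, i * s i := by
  have hpt : ∀ i ∈ Finset.range M, i * s i = i * sdec s d i + (if i = d then d else 0) := by
    intro i _
    show i * s i = i * (s i - if i = d then 1 else 0) + (if i = d then d else 0)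
    by_cases hi : i = d
    · subst hi
      have h2 : i ≤ i * s i := Nat.le_mul_of_pos_right i hs
      simp only [eq_self_iff_true, if_true, Nat.mul_sub, Nat.mul_one]
      omega
    · simp [hi]
  rw [Finset.sum_congr rfl hpt, Finset.sum_add_distrib,
    Finset.sum_ite_eq' (Finset.range M) d (fun _ => d), if_pos (Finset.mem_range.mpr hd)]

theorem d_le_mul_sum {s : ℕ → ℕ} {M d : ℕ} (hd : d < M) (hs : 1 ≤ s d) :
    d ≤ ∑ i ∈ Finset.range M, i * s i := by
  have h1 : d ≤ d * s d := Nat.le_mul_of_pos_right d hs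
  exact h1.trans (Finset.single_le_sum (f := fun i => i * s i)
    (fun _ _ => Nat.zero_le _) (Finset.mem_range.mpr hd))

theorem prod_sdec {s : ℕ → ℕ} {M d : ℕ} (hd : d < M) (hs : 1 ≤ s d) :
    ∏ i ∈ Finset.range M, Nat.factorial (s i)
      = s d * ∏ i ∈ Finset.range M, Nat.factorial (sdec s d i) := by
  have hpt : ∀ i ∈ Finset.range M,
      Nat.factorial (s i) = Nat.factorial (sdec s d i) * (if i = d then s d else 1) := by
    intro i _
    show Nat.factorial (s i)
      = Nat.factorial (s i - if i = d then 1 else 0) * (if i = d then s d else 1)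
    by_cases hi : i = d
    · subst hi
      simp only [if_pos rfl]
      obtain ⟨k, hk⟩ : ∃ k, s i = k + 1 := ⟨s i - 1, by omega⟩
      rw [hk]
      simp [Nat.factorial_succ, Nat.mul_comm]
    · simp [hi]
  rw [Finset.prod_congr rfl hpt, Finset.prod_mul_distrib,
    Finset.prod_ite_eq' (Finset.range M) d (fun _ => s d), if_pos (Finset.mem_range.mpr hd),
    Nat.mul_comm]

theorem forestSet_eq_empty {s : ℕ → ℕ} {M m : ℕ}
    (hsupp : ∀ i, M ≤ i → s i = 0)
    (hm : m = ∑ i ∈ Finset.range M, s i)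
    (hz : m = 0 + ∑ i ∈ Finset.range M, i * s i)
    (hm1 : 1 ≤ m) : forestSet s = ∅ := by
  ext f
  simp only [Set.mem_empty_iff_false, iff_false]
  intro hf
  obtain ⟨hV, hlen⟩ := forest_lengths hsupp hm hz hf
  rw [List.length_eq_zero_iff.mp hlen] at hf
  have : ∀ i, s i = 0 := fun i => (mem_forestSet_iff.mp hf i).symm.trans rfl
  rw [Finset.sum_congr rfl fun i _ => this i] at hm
  simp at hm
  omega

end Paper.PlaneTree
end Aux5
section Main
namespace Paper.PlaneTree

theorem master : ∀ m : ℕ, ∀ (s : ℕ → ℕ) (M z : ℕ),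
    (∀ i, M ≤ i → s i = 0) →
    m = ∑ i ∈ Finset.range M, s i →
    m = z + ∑ i ∈ Finset.range M, i * s i →
    1 ≤ z →
    (forestSet s).ncard * (∏ i ∈ Finset.range M, Nat.factorial (s i))
      = z * Nat.factorial (m - 1) := by
  intro m
  induction m using Nat.strong_induction_on with
  | _ m IH =>
  intro s M z hsupp hm hz hz1
  rcases Nat.lt_or_ge m 2 with hm2 | hm2
  -- small cases m = 0, m = 1
  · have hm0 : m ≠ 0 := by omega
    have hm1 : m = 1 := by omega
    subst hm1
    have hz' : z = 1 := by omega
    subst hz'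
    have he : ∑ i ∈ Finset.range M, i * s i = 0 := by omega
    have hM : 1 ≤ M := by
      rcases Nat.eq_zero_or_pos M with h | h
      · subst h; simp at hm
      · exact h
    have hs1 : ∀ i, 1 ≤ i → s i = 0 := by
      intro i hi
      by_cases hiM : i < M
      · have h0 := (Finset.sum_eq_zero_iff).mp he i (Finset.mem_range.mpr hiM)
        rcases Nat.mul_eq_zero.mp h0 with h | h
        · omega
        · exact h
      · exact hsupp i (by omega)
    have hs0 : s 0 = 1 := by
      have hsum : ∑ i ∈ Finset.range M, s i = s 0 := by
        refine Finset.sum_eq_single_of_mem 0 (Finset.mem_range.mpr hM) ?_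
        intro i _ hi
        exact hs1 i (by omega)
      omega
    have hset : forestSet s = {[PlaneTree.node []]} := by
      ext f
      simp only [Set.mem_singleton_iff]
      constructor
      · intro hf
        obtain ⟨hV, hlen⟩ := forest_lengths hsupp hm hz hf
        obtain ⟨t, rfl⟩ := List.length_eq_one_iff.mp hlen
        have hVt : (pos t).length = 1 := by simpa [Vlen] using hV
        cases t with
        | node ts =>
          have hnl := pos_node_length ts
          have h1 := length_le_sum_map ts (fun t => (pos t).length)
            (fun c _ => pos_length_pos c)
          have hts : ts.length = 0 := by omega
          rw [List.length_eq_zero_iff.mp hts]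
      · rintro rfl
        refine mem_forestSet_iff.mpr fun i => ?_
        rw [ecdF_cons, ecd_node]
        cases i with
        | zero => simp [ecdF_nil, hs0]
        | succ j => simp [ecdF_nil, hs1 (j+1) (by omega)]
    rw [hset, Set.ncard_singleton, Nat.one_mul]
    have hprod : ∏ i ∈ Finset.range M, Nat.factorial (s i) = 1 :=
      Finset.prod_eq_one (fun i _ => by
        rcases Nat.eq_zero_or_pos i with rfl | h
        · rw [hs0]; rfl
        · rw [hs1 i h]; rfl)
    rw [hprod]
    simp
  -- main case : m ≥ 2
  · have hFin : (forestSet s).Finite := finite_forestSet hsupp hm hz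
    set D : Finset ℕ := (Finset.range M).filter (fun d => 1 ≤ s d) with hD
    have hdm : ∀ d ∈ D, d < M ∧ 1 ≤ s d := by
      intro d hd
      rw [hD, Finset.mem_filter, Finset.mem_range] at hd
      exact hd
    have hyps' : ∀ d, d < M → 1 ≤ s d →
        (∀ i, M ≤ i → sdec s d i = 0) ∧
        (m - 1 = ∑ i ∈ Finset.range M, sdec s d i) ∧
        (m - 1 = (z - 1 + d) + ∑ i ∈ Finset.range M, i * sdec s d i) := by
      intro d h1 h2
      refine ⟨fun i hi => by simp [sdec, hsupp i hi], ?_, ?_⟩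
      · have := sdec_sum h1 h2; omega
      · have h3 := sdec_mul_sum h1 h2
        have h4 := d_le_mul_sum h1 h2
        omega
    have hfin' : ∀ d, d < M → 1 ≤ s d → (forestSet (sdec s d)).Finite := by
      intro d h1 h2
      obtain ⟨a, b, c⟩ := hyps' d h1 h2
      exact finite_forestSet a b c
    set A : ℕ → Finset (List PlaneTree) := fun d =>
      if h : (forestSet (sdec s d)).Finite then h.toFinset else ∅ with hA
    have hAmem : ∀ d, d < M → 1 ≤ s d →
        ∀ f', f' ∈ A d ↔ f' ∈ forestSet (sdec s d) := by
      intro d h1 h2 f'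
      rw [hA]
      simp only [dif_pos (hfin' d h1 h2)]
      exact Set.Finite.mem_toFinset _
    have hlen' : ∀ d, d < M → 1 ≤ s d → ∀ f' ∈ forestSet (sdec s d),
        f'.length = z - 1 + d := by
      intro d h1 h2 f' hf'
      obtain ⟨a, b, c⟩ := hyps' d h1 h2
      exact (forest_lengths a b c hf').2
    have hcover : hFin.toFinset = D.biUnion (fun d =>
        (A d).image (fun f' => PlaneTree.node (f'.take d) :: f'.drop d)) := by
      ext f
      rw [Set.Finite.mem_toFinset, Finset.mem_biUnion]
      constructor
      · intro hf
        have hlenf : f.length = z := (forest_lengths hsupp hm hz hf).2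
        obtain ⟨t, rest, rfl⟩ : ∃ t rest, f = t :: rest := by
          cases f with
          | nil => simp at hlenf; omega
          | cons t rest => exact ⟨t, rest, rfl⟩
        cases t with
        | node cs =>
          obtain ⟨hsd, hmem'⟩ := mem_sdec_of hf
          have hdM : cs.length < M := by
            by_contra h
            rw [hsupp cs.length (by omega)] at hsd; omega
          refine ⟨cs.length, ?_, ?_⟩
          · rw [hD, Finset.mem_filter, Finset.mem_range]; exact ⟨hdM, hsd⟩
          · exact Finset.mem_image.mpr ⟨cs ++ rest, (hAmem cs.length hdM hsd _).mpr hmem',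
              by rw [List.take_left, List.drop_left]⟩
      · rintro ⟨d, hdD, him⟩
        obtain ⟨f', hf'A, rfl⟩ := Finset.mem_image.mp him
        obtain ⟨hdM, hsd⟩ := hdm d hdD
        have hf' := (hAmem d hdM hsd _).mp hf'A
        have hl := hlen' d hdM hsd f' hf'
        exact phi_mem hsd hf' (by omega)
    have hdisj : ∀ d ∈ D, ∀ d' ∈ D, d ≠ d' →
        Disjoint ((A d).image (fun f' => PlaneTree.node (f'.take d) :: f'.drop d))
          ((A d').image (fun f' => PlaneTree.node (f'.take d') :: f'.drop d')) := by
      intro d hd d' hd' hne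
      rw [Finset.disjoint_left]
      rintro g hg hg'
      obtain ⟨hdM, hsd⟩ := hdm d hd
      obtain ⟨hdM', hsd'⟩ := hdm d' hd'
      obtain ⟨a, haA, rfl⟩ := Finset.mem_image.mp hg
      obtain ⟨b, hbA, heq⟩ := Finset.mem_image.mp hg'
      have hla := hlen' d hdM hsd a ((hAmem d hdM hsd _).mp haA)
      have hlb := hlen' d' hdM' hsd' b ((hAmem d' hdM' hsd' _).mp hbA)
      have h1' : b.take d' = a.take d := by
        injection (List.cons.injEq _ _ _ _ ▸ heq).1 with hh
      have h1 : (b.take d').length = (a.take d).length := by rw [h1']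
      rw [List.length_take, List.length_take] at h1
      omega
    have hinj : ∀ d ∈ D, Set.InjOn
        (fun f' : List PlaneTree => PlaneTree.node (f'.take d) :: f'.drop d)
        ↑(A d) := by
      intro d hd
      obtain ⟨hdM, hsd⟩ := hdm d hd
      intro a haA b hbA heq
      have hla := hlen' d hdM hsd a ((hAmem d hdM hsd _).mp (by simpa using haA))
      have hlb := hlen' d hdM hsd b ((hAmem d hdM hsd _).mp (by simpa using hbA))
      simp only [List.cons.injEq, PlaneTree.node.injEq] at heq
      calc a = a.take d ++ a.drop d := (List.take_append_drop d a).symm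
        _ = b.take d ++ b.drop d := by rw [heq.1, heq.2]
        _ = b := List.take_append_drop d b
    have hcard : (forestSet s).ncard = ∑ d ∈ D, (forestSet (sdec s d)).ncard := by
      rw [Set.ncard_eq_toFinset_card _ hFin, hcover, Finset.card_biUnion hdisj]
      refine Finset.sum_congr rfl fun d hd => ?_
      obtain ⟨hdM, hsd⟩ := hdm d hd
      rw [Finset.card_image_of_injOn (hinj d hd),
        Set.ncard_eq_toFinset_card _ (hfin' d hdM hsd), hA]
      simp only [dif_pos (hfin' d hdM hsd)]
    -- per-term evaluation
    have hterm : ∀ d ∈ D, (forestSet (sdec s d)).ncard *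
        (∏ i ∈ Finset.range M, Nat.factorial (s i))
          = s d * ((z - 1 + d) * Nat.factorial (m - 2)) := by
      intro d hd
      obtain ⟨hdM, hsd⟩ := hdm d hd
      obtain ⟨ha, hb, hc⟩ := hyps' d hdM hsd
      rw [prod_sdec hdM hsd]
      by_cases hzd : z - 1 + d = 0
      · have hempty : forestSet (sdec s d) = ∅ :=
          forestSet_eq_empty ha hb (by omega) (by omega)
        rw [hempty, hzd]
        simp
      · have hIH := IH (m - 1) (by omega) (sdec s d) M (z - 1 + d) ha hb hc (by omega)
        have hmm : m - 1 - 1 = m - 2 := by omega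
        rw [hmm] at hIH
        calc (forestSet (sdec s d)).ncard *
            (s d * ∏ i ∈ Finset.range M, Nat.factorial (sdec s d i))
            = s d * ((forestSet (sdec s d)).ncard *
                ∏ i ∈ Finset.range M, Nat.factorial (sdec s d i)) := by ring
          _ = s d * ((z - 1 + d) * Nat.factorial (m - 2)) := by rw [hIH]
    rw [hcard, Finset.sum_mul, Finset.sum_congr rfl hterm]
    have hext : ∑ d ∈ D, s d * ((z - 1 + d) * Nat.factorial (m - 2))
        = ∑ d ∈ Finset.range M, s d * ((z - 1 + d) * Nat.factorial (m - 2)) := by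
      refine Finset.sum_subset (Finset.filter_subset _ _) fun d hdR hdD => ?_
      have : ¬ (1 ≤ s d) := by
        intro h
        exact hdD (by rw [hD, Finset.mem_filter]; exact ⟨hdR, h⟩)
      have : s d = 0 := by omega
      rw [this, Nat.zero_mul]
    rw [hext]
    -- final arithmetic
    obtain ⟨n, rfl⟩ : ∃ n, m = n + 2 := ⟨m - 2, by omega⟩
    obtain ⟨w, rfl⟩ : ∃ w, z = w + 1 := ⟨z - 1, by omega⟩
    simp only [Nat.add_sub_cancel, Nat.succ_sub_one]
    have hsimp : ∀ d ∈ Finset.range M,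
        s d * ((w + d) * Nat.factorial n)
          = (s d * w + d * s d) * Nat.factorial n := by
      intro d _
      ring
    rw [Finset.sum_congr rfl hsimp, ← Finset.sum_mul]
    have hsum : ∑ d ∈ Finset.range M, (s d * w + d * s d)
        = (∑ d ∈ Finset.range M, s d) * w + ∑ d ∈ Finset.range M, d * s d := by
      rw [Finset.sum_add_distrib, Finset.sum_mul]
    rw [hsum, ← hm]
    have hkey : (n + 2) * w + ∑ d ∈ Finset.range M, d * s d = (w + 1) * (n + 1) := by
      have h5 : w + ∑ d ∈ Finset.range M, d * s d = n + 1 := by omega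
      calc (n + 2) * w + ∑ d ∈ Finset.range M, d * s d
          = (n + 1) * w + (w + ∑ d ∈ Finset.range M, d * s d) := by ring
        _ = (n + 1) * w + (n + 1) := by rw [h5]
        _ = (w + 1) * (n + 1) := by ring
    rw [hkey]
    show (w + 1) * (n + 1) * Nat.factorial n = (w + 1) * Nat.factorial (n + 1)
    rw [Nat.factorial_succ]
    ring

end Paper.PlaneTree
end Main



open Paper Paper.PlaneTree in
/-- the number of plane forests with ranked roots having ECD `s`
equals `z (m−1)! / ∏ s_i!`. -/
theorem number_of_plane_forests_with_ranked_roots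
    (s : ℕ → ℕ) (M z m : ℕ)
    (hsupp : ∀ i, M ≤ i → s i = 0)
    (hm : m = ∑ i ∈ Finset.range M, s i)
    (hz : m = z + ∑ i ∈ Finset.range M, i * s i)
    (hz1 : 1 ≤ z) :
    (forestSet s).ncard * (∏ i ∈ Finset.range M, Nat.factorial (s i))
      = z * Nat.factorial (m - 1) := by
  exact Paper.PlaneTree.master m s M z hsupp hm hz hz1
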